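/- Let φ = C1 ∧ ⋯ ∧ Cm be a CNF formula over Boolean variables x1,…,xn in which every clause contains either 2 or 3 literals, every variable occurs in at most 3 clauses, and every variable occurs in at least one clause. Let a, b ∈ Σ be distinct letters and set d := (bab)^n. Define the functional regex formula γ1 := (b·x1{a*}·a*·b)·⋯·(b·xn{a*}·a*·b), and for each clause Ci define the disjunction-free regex formula γ2^i as follows: for a variable index j occurring in Ci let δj := b·xj{ε}·a·b if xj occurs positively in Ci and δj := b·xj{a}·b if ¬xj occurs in Ci; if Ci contains exactly the variable indices i1 < i2, set γ2^i := (bab)^{i1−1}·δ_{i1}·(bab)^{i2−i1−1}·δ_{i2}·(bab)^{n−i2}, and if Ci contains exactly the variable indices i1 < i2 < i3, set γ2^i := (bab)^{i1−1}·δ_{i1}·(bab)^{i2−i1−1}·δ_{i2}·(bab)^{i3−i2−1}·δ_{i3}·(bab)^{n−i3}; finally γ2 := γ2^1 ∨ ⋯ ∨ γ2^m. Then γ1 is functional, each γ2^i is disjunction-free, every variable xj appears in at most 3 of the disjuncts γ2^i, and ⟦γ1 ∖ γ2⟧(d) ≠ ∅ if and only if φ is satisfiable. -/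

import Mathlib

namespace Spanners

open scoped Classical

/-! ### Spans and mappings -/

abbrev Span := ℕ × ℕ

abbrev VMapping := ℕ → Option Span

def emptyMapping : VMapping := fun _ => none

def mapDom (μ : VMapping) : Set ℕ := {x | μ x ≠ none}

/-- Two mappings are compatible if they agree on every common variable. -/
def Compatible (μ1 μ2 : VMapping) : Prop :=
  ∀ x s1 s2, μ1 x = some s1 → μ2 x = some s2 → s1 = s2

def DisjointDom (μ1 μ2 : VMapping) : Prop :=
  ∀ x, μ1 x = none ∨ μ2 x = none

def munion (μ1 μ2 : VMapping) : VMapping := fun x =>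
  match μ1 x with
  | some s => some s
  | none => μ2 x

def minsert (x : ℕ) (s : Span) (μ : VMapping) : VMapping :=
  fun y => if y = x then some s else μ y

/-- Natural join of two sets of mappings. -/
def joinSet (S1 S2 : Set VMapping) : Set VMapping :=
  {μ | ∃ μ1 ∈ S1, ∃ μ2 ∈ S2, Compatible μ1 μ2 ∧ μ = munion μ1 μ2}

/-- Difference of two sets of mappings. -/
def diffSet (S1 S2 : Set VMapping) : Set VMapping :=
  {μ1 | μ1 ∈ S1 ∧ ∀ μ2 ∈ S2, ¬ Compatible μ1 μ2}

/-- Restriction of a mapping to a set of variables. -/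
noncomputable def restrictMap (μ : VMapping) (V : Set ℕ) : VMapping :=
  fun x => if x ∈ V then μ x else none

/-- Projection of a set of mappings to a set of variables. -/
def projSet (V : Set ℕ) (S : Set VMapping) : Set VMapping :=
  {μ' | ∃ μ ∈ S, μ' = restrictMap μ V}

/-! ### Regex formulas -/

inductive RGX (Sig : Type) where
  | empty : RGX Sig
  | eps : RGX Sig
  | letter : Sig → RGX Sig
  | union : RGX Sig → RGX Sig → RGX Sig
  | concat : RGX Sig → RGX Sig → RGX Sig
  | star : RGX Sig → RGX Sig
  | bind : ℕ → RGX Sig → RGX Sig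

variable {Sig : Type}

def RGX.vars : RGX Sig → Finset ℕ
  | .empty => ∅
  | .eps => ∅
  | .letter _ => ∅
  | .union a b => a.vars ∪ b.vars
  | .concat a b => a.vars ∪ b.vars
  | .star a => a.vars
  | .bind x a => insert x a.vars

def RGX.size : RGX Sig → ℕ
  | .empty => 1
  | .eps => 1
  | .letter _ => 1
  | .union a b => a.size + b.size + 1
  | .concat a b => a.size + b.size + 1
  | .star a => a.size + 1
  | .bind _ a => a.size + 1

/-- The schemaless semantics `⟨α⟩(d)`: `RMatch α d i j μ` means `([i,j⟩, μ) ∈ ⟨α⟩(d)`. -/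
inductive RMatch : RGX Sig → List Sig → ℕ → ℕ → VMapping → Prop where
  | eps {d : List Sig} {i : ℕ} (h1 : 1 ≤ i) (h2 : i ≤ d.length + 1) :
      RMatch .eps d i i emptyMapping
  | letter {d : List Sig} {i : ℕ} {σ : Sig} (h1 : 1 ≤ i) (h2 : d[i - 1]? = some σ) :
      RMatch (.letter σ) d i (i + 1) emptyMapping
  | unionL {a b : RGX Sig} {d : List Sig} {i j : ℕ} {μ : VMapping}
      (h : RMatch a d i j μ) : RMatch (.union a b) d i j μ
  | unionR {a b : RGX Sig} {d : List Sig} {i j : ℕ} {μ : VMapping}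
      (h : RMatch b d i j μ) : RMatch (.union a b) d i j μ
  | concat {a b : RGX Sig} {d : List Sig} {i k j : ℕ} {μ1 μ2 : VMapping}
      (h1 : RMatch a d i k μ1) (h2 : RMatch b d k j μ2) (hd : DisjointDom μ1 μ2) :
      RMatch (.concat a b) d i j (munion μ1 μ2)
  | bind {x : ℕ} {a : RGX Sig} {d : List Sig} {i j : ℕ} {μ : VMapping}
      (h : RMatch a d i j μ) (hx : μ x = none) :
      RMatch (.bind x a) d i j (minsert x (i, j) μ)
  | starNil {a : RGX Sig} {d : List Sig} {i : ℕ} (h1 : 1 ≤ i) (h2 : i ≤ d.length + 1) :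
      RMatch (.star a) d i i emptyMapping
  | starCons {a : RGX Sig} {d : List Sig} {i k j : ℕ} {μ1 μ2 : VMapping}
      (h1 : RMatch a d i k μ1) (h2 : RMatch (.star a) d k j μ2) (hd : DisjointDom μ1 μ2) :
      RMatch (.star a) d i j (munion μ1 μ2)

/-- `⟦α⟧(d)`: mappings extracted with the full span. -/
def rgxSem (α : RGX Sig) (d : List Sig) : Set VMapping :=
  {μ | RMatch α d 1 (d.length + 1) μ}

/-- Sequential regex formulas. -/
def RGX.Sequential : RGX Sig → Prop
  | .empty => True
  | .eps => True
  | .letter _ => True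
  | .union a b => a.Sequential ∧ b.Sequential
  | .concat a b => a.Sequential ∧ b.Sequential ∧ Disjoint a.vars b.vars
  | .star a => a.Sequential ∧ a.vars = ∅
  | .bind x a => a.Sequential ∧ x ∉ a.vars

/-- Variable-free words over the alphabet (built from ε, letters and concatenation). -/
inductive RGX.IsWord : RGX Sig → Prop where
  | eps : RGX.IsWord .eps
  | letter (σ : Sig) : RGX.IsWord (.letter σ)
  | concat {a b : RGX Sig} : a.IsWord → b.IsWord → RGX.IsWord (.concat a b)

/-- Functional for a set `V` of variables. -/
inductive FunctionalFor : RGX Sig → Finset ℕ → Prop where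
  | word {α : RGX Sig} (h : α.IsWord) : FunctionalFor α ∅
  | union {a b : RGX Sig} {V : Finset ℕ} (ha : FunctionalFor a V) (hb : FunctionalFor b V) :
      FunctionalFor (.union a b) V
  | concat {a b : RGX Sig} {V : Finset ℕ} (V1 : Finset ℕ) (hsub : V1 ⊆ V)
      (ha : FunctionalFor a V1) (hb : FunctionalFor b (V \ V1)) :
      FunctionalFor (.concat a b) V
  | star {a : RGX Sig} (h : FunctionalFor a ∅) : FunctionalFor (.star a) ∅
  | bind {x : ℕ} {a : RGX Sig} {V : Finset ℕ} (h : FunctionalFor a (V.erase x)) :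
      FunctionalFor (.bind x a) V

def RGX.Functional (α : RGX Sig) : Prop := FunctionalFor α α.vars

/-- Disjunctive functional regex formulas: finite disjunctions of functional regex formulas. -/
inductive DisjFunctional : RGX Sig → Prop where
  | base {γ : RGX Sig} (h : γ.Functional) : DisjFunctional γ
  | union {a b : RGX Sig} (ha : DisjFunctional a) (hb : DisjFunctional b) :
      DisjFunctional (.union a b)

/-- Number of disjuncts of a (disjunctive) regex formula. -/
def countDisjuncts : RGX Sig → ℕ
  | .union a b => countDisjuncts a + countDisjuncts b
  | _ => 1

/-- Disjunction-free regex formulas. -/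
def RGX.DisjFree : RGX Sig → Prop
  | .union _ _ => False
  | .concat a b => a.DisjFree ∧ b.DisjFree
  | .star a => a.DisjFree
  | .bind _ a => a.DisjFree
  | _ => True

/-- `γ` is synchronized for `x`: no subformula `γ1 ∨ γ2` contains `x`. -/
def RGX.SyncFor : RGX Sig → ℕ → Prop
  | .union a b, x => (x ∉ a.vars ∧ x ∉ b.vars) ∧ a.SyncFor x ∧ b.SyncFor x
  | .concat a b, x => a.SyncFor x ∧ b.SyncFor x
  | .star a, x => a.SyncFor x
  | .bind _ a, x => a.SyncFor x
  | _, _ => True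

/-- Concatenation of a list of regex formulas. -/
def concatList : List (RGX Sig) → RGX Sig
  | [] => .eps
  | [α] => α
  | α :: rest => .concat α (concatList rest)

/-- Disjunction of a list of regex formulas. -/
def disjList : List (RGX Sig) → RGX Sig
  | [] => .empty
  | [α] => α
  | α :: rest => .union α (disjList rest)

/-! ### vset-automata -/

inductive VLabel (Sig : Type) where
  | eps : VLabel Sig
  | letter : Sig → VLabel Sig
  | openv : ℕ → VLabel Sig
  | closev : ℕ → VLabel Sig
deriving DecidableEq

structure VA (Sig : Type) [DecidableEq Sig] where
  q0 : ℕ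
  F : Finset ℕ
  δ : Finset (ℕ × VLabel Sig × ℕ)

variable [DecidableEq Sig]

/-- The states of a VA: the initial state and all states mentioned in `F` or in transitions. -/
def statesOf (A : VA Sig) : Finset ℕ :=
  insert A.q0 (A.F ∪ A.δ.image (fun t => t.1) ∪ A.δ.image (fun t => t.2.2))

def labelVars : VLabel Sig → Finset ℕ
  | .openv x => {x}
  | .closev x => {x}
  | _ => ∅

/-- `Vars(A)`: the variables mentioned in the transitions of `A`. -/
def varsOf (A : VA Sig) : Finset ℕ := A.δ.biUnion (fun t => labelVars t.2.1)

/-- Total size of a VA: number of states plus number of transitions. -/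
def vaSize (A : VA Sig) : ℕ := (statesOf A).card + A.δ.card

/-- `A.PathFrom p ls q`: a path (run segment) from `p` to `q` with label sequence `ls`. -/
inductive VA.PathFrom (A : VA Sig) : ℕ → List (VLabel Sig) → ℕ → Prop where
  | nil (q : ℕ) : VA.PathFrom A q [] q
  | cons {p q r : ℕ} {l : VLabel Sig} {ls : List (VLabel Sig)}
      (h : (p, l, q) ∈ A.δ) (htail : VA.PathFrom A q ls r) : VA.PathFrom A p (l :: ls) r

/-- The word (document) read by a sequence of labels. -/
def readWord : List (VLabel Sig) → List Sig :=
  List.filterMap fun l => match l with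
    | VLabel.letter σ => some σ
    | _ => none

def isLetterL : VLabel Sig → Bool
  | .letter _ => true
  | _ => false

/-- The current position in the document just before executing the `k`-th label. -/
def posAt (ls : List (VLabel Sig)) (k : ℕ) : ℕ := 1 + (ls.take k).countP isLetterL

/-- Validity of a run, given by its label sequence. -/
def ValidLabels (ls : List (VLabel Sig)) : Prop :=
  ∀ x : ℕ,
    ls.count (VLabel.openv x) ≤ 1 ∧
    ls.count (VLabel.closev x) ≤ 1 ∧
    ((VLabel.openv x) ∈ ls ↔ (VLabel.closev x) ∈ ls) ∧
    ∀ i j : ℕ, ls[i]? = some (VLabel.openv x) → ls[j]? = some (VLabel.closev x) →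
      posAt ls i ≤ posAt ls j

/-- The mapping `μ_ρ` extracted from a (valid accepting) run with label sequence `ls`. -/
def runMapping (ls : List (VLabel Sig)) : VMapping := fun x =>
  if (VLabel.openv x) ∈ ls then
    some (posAt ls (ls.idxOf (VLabel.openv x)), posAt ls (ls.idxOf (VLabel.closev x)))
  else none

/-- `ls` is the label sequence of an accepting run of `A`. -/
def AcceptsWith (A : VA Sig) (ls : List (VLabel Sig)) : Prop :=
  ∃ qf, VA.PathFrom A A.q0 ls qf ∧ qf ∈ A.F

/-- `⟦A⟧(d)`. -/
def vaSem (A : VA Sig) (d : List Sig) : Set VMapping :=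
  {μ | ∃ ls, AcceptsWith A ls ∧ readWord ls = d ∧ ValidLabels ls ∧ μ = runMapping ls}

/-- A VA is sequential if all of its accepting runs are valid. -/
def VA.Sequential (A : VA Sig) : Prop := ∀ ls, AcceptsWith A ls → ValidLabels ls

/-- A run from the initial state to `q` that is a prefix of an accepting run. -/
def PrefixRun (A : VA Sig) (ls : List (VLabel Sig)) (q : ℕ) : Prop :=
  VA.PathFrom A A.q0 ls q ∧ ∃ ls' qf, VA.PathFrom A q ls' qf ∧ qf ∈ A.F

/-- `A` is semi-functional for the variable `x`: no state has extended configuration `d`. -/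
def SemiFunctionalFor (A : VA Sig) (x : ℕ) : Prop :=
  ¬ ∃ q ls1 ls2, PrefixRun A ls1 q ∧ PrefixRun A ls2 q ∧
      (VLabel.closev x) ∈ ls1 ∧ (VLabel.openv x) ∉ ls2

def SemiFunctionalForSet (A : VA Sig) (X : Finset ℕ) : Prop :=
  ∀ x ∈ X, SemiFunctionalFor A x

/-- Functional VA: sequential, and every accepting run opens and closes every variable. -/
def FunctionalVA (A : VA Sig) : Prop :=
  A.Sequential ∧ ∀ ls, AcceptsWith A ls → ∀ x ∈ varsOf A,
    (VLabel.openv x) ∈ ls ∧ (VLabel.closev x) ∈ ls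

/-- `l` has a unique target state in `A`. -/
def UniqueTarget (A : VA Sig) (l : VLabel Sig) : Prop :=
  ∃ qt : ℕ, ∀ p q : ℕ, (p, l, q) ∈ A.δ → q = qt

/-- `A` is synchronized for the variable `x`. -/
def SyncForVA (A : VA Sig) (x : ℕ) : Prop :=
  UniqueTarget A (VLabel.openv x) ∧ UniqueTarget A (VLabel.closev x) ∧
    ((∀ ls, AcceptsWith A ls → (VLabel.openv x) ∈ ls ∧ (VLabel.closev x) ∈ ls) ∨
     (∀ ls, AcceptsWith A ls → (VLabel.openv x) ∉ ls ∧ (VLabel.closev x) ∉ ls))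

/-- `A` is the disjunctive functional VA with functional components `parts`. -/
def DisjFunctionalVAWith (A : VA Sig) (parts : List (VA Sig)) : Prop :=
  (∀ B ∈ parts, FunctionalVA B) ∧
  (parts.Pairwise fun B C => Disjoint (statesOf B) (statesOf C)) ∧
  (∀ B ∈ parts, A.q0 ∉ statesOf B) ∧
  A.F = parts.foldr (fun B s => B.F ∪ s) (∅ : Finset ℕ) ∧
  A.δ = (parts.map (fun B => (A.q0, (VLabel.eps : VLabel Sig), B.q0))).toFinset
        ∪ parts.foldr (fun B s => B.δ ∪ s) (∅ : Finset (ℕ × VLabel Sig × ℕ))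

def DisjFunctionalVA (A : VA Sig) : Prop := ∃ parts, DisjFunctionalVAWith A parts

/-! ### 3CNF formulas -/

/-- A 3CNF clause over `n` Boolean variables: a triple of literals; `(i, true)` is `xᵢ`,
`(i, false)` is `¬xᵢ`. -/
def Clause3 (n : ℕ) : Type := (Fin n × Bool) × (Fin n × Bool) × (Fin n × Bool)

def litsOf {n : ℕ} (c : Clause3 n) : List (Fin n × Bool) := [c.1, c.2.1, c.2.2]

def clauseSat {n : ℕ} (τ : Fin n → Bool) (c : Clause3 n) : Prop :=
  ∃ l ∈ litsOf c, τ l.1 = l.2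

def Sat3 {n m : ℕ} (φ : Fin m → Clause3 n) : Prop :=
  ∃ τ : Fin n → Bool, ∀ j, clauseSat τ (φ j)

end Spanners

namespace Spanners

variable {Sig : Type}

/-- The block `bab`. -/
def babS19 (a b : Sig) : RGX Sig := .concat (.letter b) (.concat (.letter a) (.letter b))

/-- `γ1 := (b·x1{a*}·a*·b)·⋯·(b·xn{a*}·a*·b)`. -/
def gamma1S19 (a b : Sig) (n : ℕ) : RGX Sig :=
  concatList (List.ofFn fun j : Fin n =>
    RGX.concat (.letter b) (.concat (.bind (j : ℕ) (.star (.letter a)))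
      (.concat (.star (.letter a)) (.letter b))))

/-- The `j`-th block of `γ2^i`: `δ_j = b·x_j{ε}·a·b` if `x_j` occurs positively in the
clause, `δ_j = b·x_j{a}·b` if `¬x_j` occurs, and `bab` if `x_j` does not occur. -/
def blockS19 (a b : Sig) {n : ℕ} (c : List (Fin n × Bool)) (j : Fin n) : RGX Sig :=
  match c.find? (fun l => decide (l.1 = j)) with
  | some l =>
      if l.2 then
        .concat (.letter b) (.concat (.bind (j : ℕ) .eps) (.concat (.letter a) (.letter b)))
      else
        .concat (.letter b) (.concat (.bind (j : ℕ) (.letter a)) (.letter b))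
  | none => babS19 a b

/-- `γ2^i`. -/
def gamma2iS19 (a b : Sig) {n : ℕ} (c : List (Fin n × Bool)) : RGX Sig :=
  concatList (List.ofFn fun j : Fin n => blockS19 a b c j)

/-- `γ2 := γ2^1 ∨ ⋯ ∨ γ2^m`. -/
def gamma2S19 (a b : Sig) {n : ℕ} (φ : List (List (Fin n × Bool))) : RGX Sig :=
  disjList (φ.map (gamma2iS19 a b))

/-! ### Auxiliary lemmas -/

lemma munion_empty_left (μ : VMapping) : munion emptyMapping μ = μ := rfl

lemma munion_empty_right (μ : VMapping) : munion μ emptyMapping = μ := by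
  funext x; unfold munion emptyMapping; cases μ x <;> rfl

lemma munion_apply (μ1 μ2 : VMapping) (x : ℕ) :
    munion μ1 μ2 x = match μ1 x with | some s => some s | none => μ2 x := rfl

lemma munion_eq_none (μ1 μ2 : VMapping) (x : ℕ) :
    munion μ1 μ2 x = none ↔ μ1 x = none ∧ μ2 x = none := by
  rw [munion_apply]; cases h : μ1 x <;> simp [h]

lemma munion_eq_some (μ1 μ2 : VMapping) (x : ℕ) (s : Span) :
    munion μ1 μ2 x = some s ↔ (μ1 x = some s ∨ (μ1 x = none ∧ μ2 x = some s)) := by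
  rw [munion_apply]; cases h : μ1 x <;> simp [h]

lemma minsert_apply (x : ℕ) (s : Span) (μ : VMapping) (y : ℕ) :
    minsert x s μ y = if y = x then some s else μ y := rfl

lemma emptyMapping_apply (x : ℕ) : emptyMapping x = none := rfl

lemma minsert_empty_eq_some {x y : ℕ} {s t : Span} :
    minsert x s emptyMapping y = some t ↔ y = x ∧ t = s := by
  rw [minsert_apply]; split <;> simp_all [emptyMapping, eq_comm]

lemma DisjointDom.empty_left (μ : VMapping) : DisjointDom emptyMapping μ :=
  fun _ => Or.inl rfl

lemma DisjointDom.empty_right (μ : VMapping) : DisjointDom μ emptyMapping :=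
  fun _ => Or.inr rfl

/-- Bounds of a match. -/
lemma rmatch_bounds {α : RGX Sig} {d : List Sig} {i j : ℕ} {μ : VMapping}
    (h : RMatch α d i j μ) : 1 ≤ i ∧ i ≤ j ∧ j ≤ d.length + 1 := by
  induction h with
  | eps h1 h2 => exact ⟨h1, le_refl _, h2⟩
  | letter h1 h2 =>
    obtain ⟨hlt, -⟩ := List.getElem?_eq_some_iff.mp h2
    omega
  | unionL h ih => exact ih
  | unionR h ih => exact ih
  | concat h1 h2 hd ih1 ih2 => omega
  | bind h hx ih => exact ih
  | starNil h1 h2 => exact ⟨h1, le_refl _, h2⟩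
  | starCons h1 h2 hd ih1 ih2 => omega
/-! ### Inversion lemmas -/

lemma eps_inv {d : List Sig} {i j : ℕ} {μ : VMapping}
    (h : RMatch (.eps : RGX Sig) d i j μ) :
    j = i ∧ μ = emptyMapping ∧ 1 ≤ i ∧ i ≤ d.length + 1 := by
  cases h with
  | eps h1 h2 => exact ⟨rfl, rfl, h1, h2⟩

lemma letter_inv {d : List Sig} {σ : Sig} {i j : ℕ} {μ : VMapping}
    (h : RMatch (.letter σ) d i j μ) :
    j = i + 1 ∧ μ = emptyMapping ∧ 1 ≤ i ∧ d[i - 1]? = some σ := by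
  cases h with
  | letter h1 h2 => exact ⟨rfl, rfl, h1, h2⟩

lemma concat_inv {α β : RGX Sig} {d : List Sig} {i j : ℕ} {μ : VMapping}
    (h : RMatch (.concat α β) d i j μ) :
    ∃ k μ1 μ2, RMatch α d i k μ1 ∧ RMatch β d k j μ2 ∧ DisjointDom μ1 μ2 ∧
      μ = munion μ1 μ2 := by
  cases h with
  | concat h1 h2 hd => exact ⟨_, _, _, h1, h2, hd, rfl⟩

lemma bind_inv {x : ℕ} {α : RGX Sig} {d : List Sig} {i j : ℕ} {μ : VMapping}
    (h : RMatch (.bind x α) d i j μ) :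
    ∃ μ0, RMatch α d i j μ0 ∧ μ0 x = none ∧ μ = minsert x (i, j) μ0 := by
  cases h with
  | bind h hx => exact ⟨_, h, hx, rfl⟩

lemma star_letter_inv {d : List Sig} {σ : Sig} {i j : ℕ} {μ : VMapping}
    (h : RMatch (.star (.letter σ)) d i j μ) :
    μ = emptyMapping ∧ i ≤ j ∧ ∀ t, i ≤ t → t < j → d[t - 1]? = some σ := by
  generalize hα : (RGX.star (.letter σ) : RGX Sig) = α at h
  induction h with
  | eps h1 h2 => cases hα
  | letter h1 h2 => cases hα
  | unionL h ih => cases hα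
  | unionR h ih => cases hα
  | concat h1 h2 hd ih1 ih2 => cases hα
  | bind h hx ih => cases hα
  | starNil h1 h2 =>
    cases hα
    exact ⟨rfl, le_refl _, fun t h1 h2 => absurd h1 (by omega)⟩
  | starCons h1 h2 hd ih1 ih2 =>
    cases hα
    obtain ⟨hj, hμ, hi, hc⟩ := letter_inv h1
    obtain ⟨hμ2, hle, hch⟩ := ih2 rfl
    subst hμ hμ2 hj
    refine ⟨munion_empty_left _, by omega, fun t ht1 ht2 => ?_⟩
    rcases eq_or_lt_of_le ht1 with rfl | hlt
    · exact hc
    · exact hch t (by omega) ht2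

/-! ### Chains of matches -/

inductive Chain : List (RGX Sig) → List Sig → ℕ → ℕ → VMapping → Prop where
  | nil {d : List Sig} {i : ℕ} (h1 : 1 ≤ i) (h2 : i ≤ d.length + 1) :
      Chain [] d i i emptyMapping
  | cons {α : RGX Sig} {L : List (RGX Sig)} {d : List Sig} {i k j : ℕ} {μ1 μ2 : VMapping}
      (h1 : RMatch α d i k μ1) (h2 : Chain L d k j μ2) (hd : DisjointDom μ1 μ2) :
      Chain (α :: L) d i j (munion μ1 μ2)

lemma chain_of_rmatch : ∀ (L : List (RGX Sig)) {d : List Sig} {i j : ℕ} {μ : VMapping},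
    RMatch (concatList L) d i j μ → Chain L d i j μ
  | [], d, i, j, μ, h => by
    obtain ⟨rfl, rfl, h1, h2⟩ := eps_inv h
    exact Chain.nil h1 h2
  | [α], d, i, j, μ, h => by
    have hb := rmatch_bounds h
    have : Chain [] d j j emptyMapping := Chain.nil (by omega) (by omega)
    have := Chain.cons h this (DisjointDom.empty_right μ)
    rwa [munion_empty_right] at this
  | α :: β :: L, d, i, j, μ, h => by
    obtain ⟨k, μ1, μ2, h1, h2, hd, rfl⟩ := concat_inv h
    exact Chain.cons h1 (chain_of_rmatch (β :: L) h2) hd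

lemma rmatch_of_chain : ∀ {L : List (RGX Sig)} {d : List Sig} {i j : ℕ} {μ : VMapping},
    Chain L d i j μ → RMatch (concatList L) d i j μ := by
  intro L
  induction L with
  | nil => intro d i j μ h; cases h with | nil h1 h2 => exact RMatch.eps h1 h2
  | cons α L ih =>
    intro d i j μ h
    cases h with
    | cons h1 h2 hd =>
      cases L with
      | nil =>
        cases h2 with | nil hh1 hh2 => rw [munion_empty_right]; exact h1
      | cons β L' => exact RMatch.concat h1 (ih h2) hd
/-! ### Generic chain lemmas for rigid blocks of length 3 -/

lemma chain_complete : ∀ (L : List (RGX Sig)) {d : List Sig} {p j : ℕ} {μ : VMapping}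
    (R : ℕ → VMapping → Prop),
    Chain L d p j μ →
    (∀ i (hi : i < L.length), ∀ q μ', RMatch L[i] d (p + 3*i) q μ' →
      q = p + 3*i + 3 ∧ R i μ') →
    j = p + 3 * L.length ∧
    (∀ x s, μ x = some s → ∃ i, ∃ _ : i < L.length, ∃ μ', R i μ' ∧ μ' x = some s) ∧
    (∀ i (hi : i < L.length), ∀ x, (∀ μ', R i μ' → μ' x ≠ none) → μ x ≠ none)
  | [], d, p, j, μ, R, h, spec => by
    cases h with
    | nil h1 h2 =>
      refine ⟨by simp, fun x s hs => by simp [emptyMapping] at hs, fun i hi => by simp at hi⟩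
  | α :: L, d, p, j, μ, R, h, spec => by
    cases h with
    | cons h1 h2 hd =>
      rename_i k μ1 μ2
      have h0 : k = p + 3 * 0 + 3 ∧ R 0 μ1 := by
        have := spec 0 (by simp) k μ1
        simp only [List.getElem_cons_zero] at this
        exact this (by simpa using h1)
      obtain ⟨hk, hR0⟩ := h0
      have hk' : k = p + 3 := by omega
      subst hk'
      have spec' : ∀ i (hi : i < L.length), ∀ q μ', RMatch L[i] d ((p+3) + 3*i) q μ' →
          q = (p+3) + 3*i + 3 ∧ (fun i => R (i+1)) i μ' := by
        intro i hi q μ' hm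
        have := spec (i+1) (by simpa using hi) q μ'
        simp only [List.getElem_cons_succ] at this
        have heq : p + 3 * (i + 1) = p + 3 + 3 * i := by ring
        rw [heq] at this
        have := this hm
        exact ⟨by omega, this.2⟩
      obtain ⟨hj, hval, hdom⟩ := chain_complete L (fun i => R (i+1)) h2 spec'
      refine ⟨by simp [hj]; ring, ?_, ?_⟩
      · intro x s hs
        rcases (munion_eq_some μ1 μ2 x s).mp hs with h1' | ⟨_, h2'⟩
        · exact ⟨0, by simp, μ1, hR0, h1'⟩
        · obtain ⟨i, hi, μ', hR, hv⟩ := hval x s h2'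
          exact ⟨i+1, by simpa using hi, μ', hR, hv⟩
      · intro i hi x hne
        rcases Nat.eq_zero_or_pos i with rfl | hpos
        · intro hcontra
          exact hne μ1 hR0 ((munion_eq_none μ1 μ2 x).mp hcontra).1
        · obtain ⟨i', rfl⟩ : ∃ i', i = i' + 1 := ⟨i - 1, by omega⟩
          intro hcontra
          exact hdom i' (by simpa using hi) x (fun μ' hR => hne μ' hR)
            ((munion_eq_none μ1 μ2 x).mp hcontra).2

lemma chain_sound : ∀ (L : List (RGX Sig)) {d : List Sig} (p : ℕ) (ν : ℕ → VMapping),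
    1 ≤ p → p + 3 * L.length ≤ d.length + 1 →
    (∀ i (hi : i < L.length), RMatch L[i] d (p + 3*i) (p + 3*i + 3) (ν i)) →
    (∀ i i' x, i < L.length → i' < L.length → i ≠ i' → ν i x = none ∨ ν i' x = none) →
    ∃ μ, Chain L d p (p + 3*L.length) μ ∧
      ∀ x s, (μ x = some s ↔ ∃ i, ∃ _ : i < L.length, ν i x = some s)
  | [], d, p, ν, hp1, hp2, spec, hdisj => by
    have hp2' : p ≤ d.length + 1 := by simpa using hp2
    refine ⟨emptyMapping, ?_, fun x s => by simp [emptyMapping]⟩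
    have hz : p + 3 * List.length ([] : List (RGX Sig)) = p := by simp
    rw [hz]
    exact Chain.nil hp1 hp2'
  | α :: L, d, p, ν, hp1, hp2, spec, hdisj => by
    have hlen : (α :: L).length = L.length + 1 := rfl
    have spec' : ∀ i (hi : i < L.length), RMatch L[i] d ((p+3) + 3*i) ((p+3) + 3*i + 3)
        ((fun i => ν (i+1)) i) := by
      intro i hi
      have := spec (i+1) (by simp; omega)
      simp only [List.getElem_cons_succ] at this
      have heq : p + 3 * (i + 1) = p + 3 + 3 * i := by ring
      rwa [heq] at this
    have hdisj' : ∀ i i' x, i < L.length → i' < L.length → i ≠ i' →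
        (fun i => ν (i+1)) i x = none ∨ (fun i => ν (i+1)) i' x = none := by
      intro i i' x hi hi' hne
      exact hdisj (i+1) (i'+1) x (by simp; omega) (by simp; omega) (by omega)
    obtain ⟨μ2, hch, hval⟩ := chain_sound L (p+3) (fun i => ν (i+1)) (by omega)
      (by simp at hp2 ⊢; omega) spec' hdisj'
    have h0 : RMatch α d p (p + 3) (ν 0) := by
      have := spec 0 (by simp)
      simpa using this
    have hdd : DisjointDom (ν 0) μ2 := by
      intro x
      cases hx : ν 0 x with
      | none => exact Or.inl rfl
      | some s =>
        right
        cases hx2 : μ2 x with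
        | none => rfl
        | some s' =>
          obtain ⟨i, hi, hv⟩ := (hval x s').mp hx2
          rcases hdisj 0 (i+1) x (by simp) (by simp; omega) (by omega) with h | h
          · rw [hx] at h; cases h
          · rw [hv] at h; cases h
    refine ⟨munion (ν 0) μ2, ?_, ?_⟩
    · have := Chain.cons h0 hch hdd
      have heq : p + 3 + 3 * L.length = p + 3 * (α :: L).length := by simp; ring
      rwa [heq] at this
    · intro x s
      rw [munion_eq_some]
      constructor
      · rintro (h | ⟨_, h⟩)
        · exact ⟨0, by simp, h⟩
        · obtain ⟨i, hi, hv⟩ := (hval x s).mp h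
          exact ⟨i+1, by simp; omega, hv⟩
      · rintro ⟨i, hi, hv⟩
        rcases Nat.eq_zero_or_pos i with rfl | hpos
        · exact Or.inl hv
        · obtain ⟨i', rfl⟩ : ∃ i', i = i' + 1 := ⟨i - 1, by omega⟩
          right
          have hi' : i' < L.length := by simp at hi; omega
          refine ⟨?_, (hval x s).mpr ⟨i', hi', hv⟩⟩
          rcases hdisj 0 (i'+1) x (by simp) (by simp; omega) (by omega) with h | h
          · exact h
          · rw [hv] at h; cases h
/-! ### The document `(bab)^n` -/

lemma doc_length (b a : Sig) (n : ℕ) :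
    ((List.replicate n [b, a, b]).flatten).length = 3 * n := by
  induction n with
  | zero => simp
  | succ m ih => simp [List.replicate_succ, ih]; ring

lemma doc_char (b a : Sig) (n : ℕ) :
    ∀ t, t < 3 * n →
      ((List.replicate n [b, a, b]).flatten)[t]? = some (if t % 3 = 1 then a else b) := by
  induction n with
  | zero => intro t ht; omega
  | succ m ih =>
    intro t ht
    rw [List.replicate_succ, List.flatten_cons]
    rcases Nat.lt_or_ge t 3 with h3 | h3
    · interval_cases t <;> simp
    · obtain ⟨t', rfl⟩ : ∃ t', t = t' + 3 := ⟨t - 3, by omega⟩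
      have : ([b, a, b] ++ (List.replicate m [b, a, b]).flatten)[t' + 3]?
          = ((List.replicate m [b, a, b]).flatten)[t']? := by
        simp [List.getElem?_append_right]
      rw [this, ih t' (by omega)]
      congr 1
      have : (t' + 3) % 3 = t' % 3 := by omega
      rw [this]
/-! ### Blocks of γ1 -/

def g1block (a b : Sig) (x : ℕ) : RGX Sig :=
  RGX.concat (.letter b) (.concat (.bind x (.star (.letter a)))
    (.concat (.star (.letter a)) (.letter b)))

lemma gamma1_eq (a b : Sig) (n : ℕ) :
    gamma1S19 a b n = concatList (List.ofFn fun j : Fin n => g1block a b (j : ℕ)) := rfl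

def docD (b a : Sig) (n : ℕ) : List Sig := (List.replicate n [b, a, b]).flatten

lemma docD_length (b a : Sig) (n : ℕ) : (docD b a n).length = 3 * n := doc_length b a n

lemma docD_char (b a : Sig) (n : ℕ) :
    ∀ t, t < 3 * n → (docD b a n)[t]? = some (if t % 3 = 1 then a else b) :=
  doc_char b a n

lemma docD_char_a (b a : Sig) (n t : ℕ) (h1 : t < 3 * n) (h2 : t % 3 = 1) :
    (docD b a n)[t]? = some a := by rw [docD_char b a n t h1, if_pos h2]

lemma docD_char_b (b a : Sig) (n t : ℕ) (h1 : t < 3 * n) (h2 : t % 3 ≠ 1) :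
    (docD b a n)[t]? = some b := by rw [docD_char b a n t h1, if_neg h2]

section Doc

variable {a b : Sig} {n : ℕ}

lemma g1block_complete (hab : a ≠ b) (x : ℕ) (hx : x < n) (q : ℕ) (μ : VMapping)
    (h : RMatch (g1block a b x) (docD b a n) (1 + 3*x) q μ) :
    q = 1 + 3*x + 3 ∧
      (μ = minsert x (3*x+2, 3*x+2) emptyMapping ∨
       μ = minsert x (3*x+2, 3*x+3) emptyMapping) := by
  obtain ⟨k1, μ1, μ2, hb1, hrest, -, rfl⟩ := concat_inv h
  obtain ⟨hk1, rfl, -, -⟩ := letter_inv hb1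
  obtain ⟨k2, ν, μ3, hbind, hrest2, -, rfl⟩ := concat_inv hrest
  obtain ⟨ν0, hstar, -, rfl⟩ := bind_inv hbind
  obtain ⟨rfl, hle2, hch2⟩ := star_letter_inv hstar
  obtain ⟨k3, ρ1, ρ2, hstar2, hlet, -, rfl⟩ := concat_inv hrest2
  obtain ⟨rfl, hle3, hch3⟩ := star_letter_inv hstar2
  obtain ⟨rfl, rfl, -, hcb⟩ := letter_inv hlet
  -- positions: k1 = 1+3x+1 = 3x+2
  have hk1' : k1 = 3*x + 2 := by omega
  subst hk1'
  -- k2 ≤ 3x+3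
  have hk2 : k2 ≤ 3*x + 3 := by
    by_contra hgt
    have := hch2 (3*x+3) (by omega) (by omega)
    rw [show 3*x+3-1 = 3*x+2 by omega, docD_char_b b a n (3*x+2) (by omega) (by omega)] at this
    exact hab (Option.some.inj this).symm
  -- k3 ≤ 3x+3
  have hk3 : k3 ≤ 3*x + 3 := by
    by_contra hgt
    have := hch3 (3*x+3) (by omega) (by omega)
    rw [show 3*x+3-1 = 3*x+2 by omega, docD_char_b b a n (3*x+2) (by omega) (by omega)] at this
    exact hab (Option.some.inj this).symm
  -- k3 = 3x+3 since char at k3 is b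
  have hk3' : k3 = 3*x + 3 := by
    rcases Nat.lt_or_ge k3 (3*x+3) with hlt | hge
    · exfalso
      have hk3e : k3 = 3*x + 2 := by omega
      rw [hk3e, show 3*x+2-1 = 3*x+1 by omega, docD_char_a b a n (3*x+1) (by omega) (by omega)] at hcb
      exact hab (Option.some.inj hcb)
    · omega
  subst hk3'
  refine ⟨by omega, ?_⟩
  rw [munion_empty_left, munion_empty_left, munion_empty_right]
  rcases Nat.lt_or_ge k2 (3*x+3) with hlt | hge
  · left; rw [show k2 = 3*x+2 by omega]
  · right; rw [show k2 = 3*x+3 by omega]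

lemma g1block_sound (x : ℕ) (hx : x < n) (t : Bool) :
    RMatch (g1block a b x) (docD b a n) (1 + 3*x) (1 + 3*x + 3)
      (minsert x (3*x+2, if t then 3*x+3 else 3*x+2) emptyMapping) := by
  have hlen := docD_length b a n
  have hcb1 : (docD b a n)[1 + 3*x - 1]? = some b := by
    rw [show 1+3*x-1 = 3*x by omega]
    exact docD_char_b b a n (3*x) (by omega) (by omega)
  have hca : (docD b a n)[3*x + 2 - 1]? = some a := by
    rw [show 3*x+2-1 = 3*x+1 by omega]
    exact docD_char_a b a n (3*x+1) (by omega) (by omega)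
  have hcb2 : (docD b a n)[3*x + 3 - 1]? = some b := by
    rw [show 3*x+3-1 = 3*x+2 by omega]
    exact docD_char_b b a n (3*x+2) (by omega) (by omega)
  have hmla : RMatch (.letter a : RGX Sig) (docD b a n) (3*x+2) (3*x+3) emptyMapping := by
    have := RMatch.letter (σ := a) (i := 3*x+2) (by omega) hca
    rwa [show 3*x+2+1 = 3*x+3 by omega] at this
  have hstar_a : RMatch (.star (.letter a) : RGX Sig) (docD b a n) (3*x+2) (3*x+3) emptyMapping := by
    have hnil : RMatch (.star (.letter a) : RGX Sig) (docD b a n) (3*x+3) (3*x+3) emptyMapping :=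
      RMatch.starNil (by omega) (by omega)
    have := RMatch.starCons hmla hnil (DisjointDom.empty_left _)
    rwa [munion_empty_left] at this
  have hstar_nil2 : RMatch (.star (.letter a) : RGX Sig) (docD b a n) (3*x+2) (3*x+2) emptyMapping :=
    RMatch.starNil (by omega) (by omega)
  have hstar_nil3 : RMatch (.star (.letter a) : RGX Sig) (docD b a n) (3*x+3) (3*x+3) emptyMapping :=
    RMatch.starNil (by omega) (by omega)
  have hmlb1 : RMatch (.letter b : RGX Sig) (docD b a n) (1+3*x) (3*x+2) emptyMapping := by
    have := RMatch.letter (σ := b) (i := 1+3*x) (by omega) hcb1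
    rwa [show 1+3*x+1 = 3*x+2 by omega] at this
  have hmlb2 : RMatch (.letter b : RGX Sig) (docD b a n) (3*x+3) (1+3*x+3) emptyMapping := by
    have := RMatch.letter (σ := b) (i := 3*x+3) (by omega) hcb2
    rwa [show 3*x+3+1 = 1+3*x+3 by omega] at this
  cases t with
  | true =>
    -- x captures the a: bind over star matching a, then middle star nil at 3x+3
    have hbind : RMatch (.bind x (.star (.letter a)) : RGX Sig) (docD b a n) (3*x+2) (3*x+3)
        (minsert x (3*x+2, 3*x+3) emptyMapping) :=
      RMatch.bind hstar_a rfl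
    have htail : RMatch (.concat (.star (.letter a)) (.letter b) : RGX Sig) (docD b a n)
        (3*x+3) (1+3*x+3) emptyMapping := by
      have := RMatch.concat hstar_nil3 hmlb2 (DisjointDom.empty_left _)
      rwa [munion_empty_left] at this
    have hmid : RMatch (.concat (.bind x (.star (.letter a)))
        (.concat (.star (.letter a)) (.letter b)) : RGX Sig) (docD b a n) (3*x+2) (1+3*x+3)
        (minsert x (3*x+2, 3*x+3) emptyMapping) := by
      have := RMatch.concat hbind htail (DisjointDom.empty_right _)
      rwa [munion_empty_right] at this
    have := RMatch.concat hmlb1 hmid (DisjointDom.empty_left _)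
    rw [munion_empty_left] at this
    exact this
  | false =>
    have hbind : RMatch (.bind x (.star (.letter a)) : RGX Sig) (docD b a n) (3*x+2) (3*x+2)
        (minsert x (3*x+2, 3*x+2) emptyMapping) :=
      RMatch.bind hstar_nil2 rfl
    have htail : RMatch (.concat (.star (.letter a)) (.letter b) : RGX Sig) (docD b a n)
        (3*x+2) (1+3*x+3) emptyMapping := by
      have := RMatch.concat hstar_a hmlb2 (DisjointDom.empty_left _)
      rwa [munion_empty_left] at this
    have hmid : RMatch (.concat (.bind x (.star (.letter a)))
        (.concat (.star (.letter a)) (.letter b)) : RGX Sig) (docD b a n) (3*x+2) (1+3*x+3)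
        (minsert x (3*x+2, 3*x+2) emptyMapping) := by
      have := RMatch.concat hbind htail (DisjointDom.empty_right _)
      rwa [munion_empty_right] at this
    have := RMatch.concat hmlb1 hmid (DisjointDom.empty_left _)
    rw [munion_empty_left] at this
    exact this

end Doc
/-! ### Blocks of γ2 -/

def nu2 {n : ℕ} (c : List (Fin n × Bool)) (j : Fin n) : VMapping :=
  match c.find? (fun l => decide (l.1 = j)) with
  | some l =>
      minsert (j : ℕ) (3*(j:ℕ)+2, if l.2 then 3*(j:ℕ)+2 else 3*(j:ℕ)+3) emptyMapping
  | none => emptyMapping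

lemma nu2_support {n : ℕ} {c : List (Fin n × Bool)} {j : Fin n} {x : ℕ} {s : Span}
    (h : nu2 c j x = some s) : x = (j : ℕ) := by
  unfold nu2 at h
  cases hf : c.find? (fun l => decide (l.1 = j)) with
  | none => rw [hf] at h; exact absurd h (by simp [emptyMapping])
  | some l => rw [hf] at h; exact (minsert_empty_eq_some.mp h).1

section Doc2

variable {a b : Sig} {n : ℕ}

lemma g2block_complete (c : List (Fin n × Bool)) (j : Fin n) (q : ℕ) (μ : VMapping)
    (h : RMatch (blockS19 a b c j) (docD b a n) (1 + 3*(j:ℕ)) q μ) :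
    q = 1 + 3*(j:ℕ) + 3 ∧ μ = nu2 c j := by
  unfold blockS19 at h
  unfold nu2
  cases hf : c.find? (fun l => decide (l.1 = j)) with
  | none =>
    rw [hf] at h
    unfold babS19 at h
    obtain ⟨k1, μ1, μ2, h1, hrest, -, rfl⟩ := concat_inv h
    obtain ⟨rfl, rfl, -, -⟩ := letter_inv h1
    obtain ⟨k2, ν1, ν2, h2, h3, -, rfl⟩ := concat_inv hrest
    obtain ⟨rfl, rfl, -, -⟩ := letter_inv h2
    obtain ⟨rfl, rfl, -, -⟩ := letter_inv h3
    exact ⟨rfl, by rw [munion_empty_left, munion_empty_left]⟩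
  | some l =>
    rw [hf] at h
    cases hl2 : l.2 with
    | true =>
      simp only [hl2, if_true] at h
      simp only [hl2, if_true]
      obtain ⟨k1, μ1, μ2, h1, hrest, -, rfl⟩ := concat_inv h
      obtain ⟨rfl, rfl, -, -⟩ := letter_inv h1
      obtain ⟨k2, ν1, ν2, h2, h3, -, rfl⟩ := concat_inv hrest
      obtain ⟨ν0, he, -, rfl⟩ := bind_inv h2
      obtain ⟨rfl, rfl, -, -⟩ := eps_inv he
      obtain ⟨k3, ρ1, ρ2, h4, h5, -, rfl⟩ := concat_inv h3
      obtain ⟨rfl, rfl, -, -⟩ := letter_inv h4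
      obtain ⟨rfl, rfl, -, -⟩ := letter_inv h5
      refine ⟨by omega, ?_⟩
      rw [munion_empty_left, munion_empty_left, munion_empty_right]
      rw [show (1:ℕ)+3*(j:ℕ)+1 = 3*(j:ℕ)+2 from by omega]
    | false =>
      simp only [hl2, Bool.false_eq_true, if_false] at h
      simp only [hl2, Bool.false_eq_true, if_false]
      obtain ⟨k1, μ1, μ2, h1, hrest, -, rfl⟩ := concat_inv h
      obtain ⟨rfl, rfl, -, -⟩ := letter_inv h1
      obtain ⟨k2, ν1, ν2, h2, h3, -, rfl⟩ := concat_inv hrest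
      obtain ⟨ν0, he, -, rfl⟩ := bind_inv h2
      obtain ⟨rfl, rfl, -, -⟩ := letter_inv he
      obtain ⟨rfl, rfl, -, -⟩ := letter_inv h3
      refine ⟨by omega, ?_⟩
      rw [munion_empty_left, munion_empty_right]
      rw [show (1:ℕ)+3*(j:ℕ)+1 = 3*(j:ℕ)+2 from by omega,
        show 3*(j:ℕ)+2+1 = 3*(j:ℕ)+3 from by omega]

lemma g2block_sound (c : List (Fin n × Bool)) (j : Fin n) :
    RMatch (blockS19 a b c j) (docD b a n) (1 + 3*(j:ℕ)) (1 + 3*(j:ℕ) + 3) (nu2 c j) := by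
  have hj : (j : ℕ) < n := j.2
  have hcb1 : (docD b a n)[1 + 3*(j:ℕ) - 1]? = some b := by
    rw [show 1+3*(j:ℕ)-1 = 3*(j:ℕ) by omega]
    exact docD_char_b b a n _ (by omega) (by omega)
  have hca : (docD b a n)[3*(j:ℕ) + 2 - 1]? = some a := by
    rw [show 3*(j:ℕ)+2-1 = 3*(j:ℕ)+1 by omega]
    exact docD_char_a b a n _ (by omega) (by omega)
  have hcb2 : (docD b a n)[3*(j:ℕ) + 3 - 1]? = some b := by
    rw [show 3*(j:ℕ)+3-1 = 3*(j:ℕ)+2 by omega]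
    exact docD_char_b b a n _ (by omega) (by omega)
  have hlen := docD_length b a n
  have hmb1 : RMatch (.letter b : RGX Sig) (docD b a n) (1+3*(j:ℕ)) (3*(j:ℕ)+2) emptyMapping := by
    have := RMatch.letter (σ := b) (i := 1+3*(j:ℕ)) (by omega) hcb1
    rwa [show 1+3*(j:ℕ)+1 = 3*(j:ℕ)+2 by omega] at this
  have hma : RMatch (.letter a : RGX Sig) (docD b a n) (3*(j:ℕ)+2) (3*(j:ℕ)+3) emptyMapping := by
    have := RMatch.letter (σ := a) (i := 3*(j:ℕ)+2) (by omega) hca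
    rwa [show 3*(j:ℕ)+2+1 = 3*(j:ℕ)+3 by omega] at this
  have hmb2 : RMatch (.letter b : RGX Sig) (docD b a n) (3*(j:ℕ)+3) (1+3*(j:ℕ)+3) emptyMapping := by
    have := RMatch.letter (σ := b) (i := 3*(j:ℕ)+3) (by omega) hcb2
    rwa [show 3*(j:ℕ)+3+1 = 1+3*(j:ℕ)+3 by omega] at this
  unfold blockS19 nu2
  cases hf : c.find? (fun l => decide (l.1 = j)) with
  | none =>
    unfold babS19
    have htail := RMatch.concat hma hmb2 (DisjointDom.empty_left _)
    rw [munion_empty_left] at htail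
    have := RMatch.concat hmb1 htail (DisjointDom.empty_left _)
    rwa [munion_empty_left] at this
  | some l =>
    cases hl2 : l.2 with
    | true =>
      simp only [hl2, if_true]
      have heps : RMatch (.eps : RGX Sig) (docD b a n) (3*(j:ℕ)+2) (3*(j:ℕ)+2) emptyMapping :=
        RMatch.eps (by omega) (by omega)
      have hbind : RMatch (.bind (j:ℕ) .eps : RGX Sig) (docD b a n) (3*(j:ℕ)+2) (3*(j:ℕ)+2)
          (minsert (j:ℕ) (3*(j:ℕ)+2, 3*(j:ℕ)+2) emptyMapping) := RMatch.bind heps rfl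
      have htail := RMatch.concat hma hmb2 (DisjointDom.empty_left _)
      rw [munion_empty_left] at htail
      have hmid := RMatch.concat hbind htail (DisjointDom.empty_right _)
      rw [munion_empty_right] at hmid
      have := RMatch.concat hmb1 hmid (DisjointDom.empty_left _)
      rwa [munion_empty_left] at this
    | false =>
      simp only [hl2, Bool.false_eq_true, if_false]
      have hbind : RMatch (.bind (j:ℕ) (.letter a) : RGX Sig) (docD b a n) (3*(j:ℕ)+2)
          (3*(j:ℕ)+3) (minsert (j:ℕ) (3*(j:ℕ)+2, 3*(j:ℕ)+3) emptyMapping) :=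
        RMatch.bind hma rfl
      have hmid := RMatch.concat hbind hmb2 (DisjointDom.empty_right _)
      rw [munion_empty_right] at hmid
      have := RMatch.concat hmb1 hmid (DisjointDom.empty_left _)
      rwa [munion_empty_left] at this

end Doc2
/-! ### disjList lemmas -/

lemma disj_sound : ∀ (L : List (RGX Sig)) (α : RGX Sig), α ∈ L →
    ∀ (d : List Sig) (i j : ℕ) (μ : VMapping), RMatch α d i j μ → RMatch (disjList L) d i j μ
  | [], α, hα, d, i, j, μ, h => by cases hα
  | [β], α, hα, d, i, j, μ, h => by
    rcases List.mem_singleton.mp hα with rfl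
    exact h
  | β :: γ :: L, α, hα, d, i, j, μ, h => by
    rcases List.mem_cons.mp hα with rfl | hmem
    · exact RMatch.unionL h
    · exact RMatch.unionR (disj_sound (γ :: L) α hmem d i j μ h)

lemma disj_complete : ∀ (L : List (RGX Sig)) {d : List Sig} {i j : ℕ} {μ : VMapping},
    RMatch (disjList L) d i j μ → ∃ α ∈ L, RMatch α d i j μ
  | [], d, i, j, μ, h => by cases h
  | [β], d, i, j, μ, h => ⟨β, by simp, h⟩
  | β :: γ :: L, d, i, j, μ, h => by
    cases h with
    | unionL h => exact ⟨β, by simp, h⟩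
    | unionR h =>
      obtain ⟨α, hα, hm⟩ := disj_complete (γ :: L) h
      exact ⟨α, List.mem_cons_of_mem _ hα, hm⟩

lemma nu2_eq_some {n : ℕ} {c : List (Fin n × Bool)} {j : Fin n} {l : Fin n × Bool}
    (hf : c.find? (fun l' => decide (l'.1 = j)) = some l) :
    nu2 c j = minsert (j : ℕ) (3*(j:ℕ)+2, if l.2 then 3*(j:ℕ)+2 else 3*(j:ℕ)+3)
      emptyMapping := by
  unfold nu2; rw [hf]

lemma nu2_eq_none {n : ℕ} {c : List (Fin n × Bool)} {j : Fin n}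
    (hf : c.find? (fun l' => decide (l'.1 = j)) = none) :
    nu2 c j = emptyMapping := by
  unfold nu2; rw [hf]

/-! ### Semantics of γ1 -/

section Sem

variable {a b : Sig} {n : ℕ}

lemma gamma1_complete (hab : a ≠ b) {μ : VMapping}
    (h : μ ∈ rgxSem (gamma1S19 a b n) (docD b a n)) :
    ∀ x s, μ x = some s →
      x < n ∧ (s = (3*x+2, 3*x+2) ∨ s = (3*x+2, 3*x+3)) := by
  rw [rgxSem, Set.mem_setOf_eq, gamma1_eq] at h
  have hch := chain_of_rmatch _ h
  set L := List.ofFn fun j : Fin n => g1block a b (j : ℕ) with hL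
  have hlen : L.length = n := by simp [hL]
  have spec : ∀ i (hi : i < L.length), ∀ q μ', RMatch L[i] (docD b a n) (1 + 3*i) q μ' →
      q = 1 + 3*i + 3 ∧
        (μ' = minsert i (3*i+2, 3*i+2) emptyMapping ∨
         μ' = minsert i (3*i+2, 3*i+3) emptyMapping) := by
    intro i hi q μ' hm
    have hi' : i < n := by omega
    have hget : L[i] = g1block a b i := by simp [hL]
    rw [hget] at hm
    exact g1block_complete hab i hi' q μ' hm
  obtain ⟨-, hval, -⟩ := chain_complete L _ hch spec
  intro x s hs
  obtain ⟨i, hi, μ', hR, hv⟩ := hval x s hs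
  rcases hR with rfl | rfl <;>
    obtain ⟨rfl, rfl⟩ := minsert_empty_eq_some.mp hv
  · exact ⟨by omega, Or.inl rfl⟩
  · exact ⟨by omega, Or.inr rfl⟩

lemma gamma1_sound (τ : Fin n → Bool) :
    ∃ μ ∈ rgxSem (gamma1S19 a b n) (docD b a n),
      ∀ j : Fin n, μ (j : ℕ) =
        some (3*(j:ℕ)+2, if τ j then 3*(j:ℕ)+3 else 3*(j:ℕ)+2) := by
  set L := List.ofFn fun j : Fin n => g1block a b (j : ℕ) with hL
  have hlen : L.length = n := by simp [hL]
  set ν : ℕ → VMapping := fun i =>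
    if h : i < n then
      minsert i (3*i+2, if τ ⟨i, h⟩ then 3*i+3 else 3*i+2) emptyMapping
    else emptyMapping with hν
  have hsupp : ∀ i x s, ν i x = some s → x = i := by
    intro i x s hs
    simp only [hν] at hs
    by_cases h : i < n
    · rw [dif_pos h] at hs; exact (minsert_empty_eq_some.mp hs).1
    · rw [dif_neg h] at hs; exact absurd hs (by simp [emptyMapping])
  have spec : ∀ i (hi : i < L.length),
      RMatch L[i] (docD b a n) (1 + 3*i) (1 + 3*i + 3) (ν i) := by
    intro i hi
    have hi' : i < n := by omega
    have hget : L[i] = g1block a b i := by simp [hL]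
    rw [hget]
    simp only [hν]
    rw [dif_pos hi']
    exact g1block_sound i hi' (τ ⟨i, hi'⟩)
  have hdisj : ∀ i i' x, i < L.length → i' < L.length → i ≠ i' →
      ν i x = none ∨ ν i' x = none := by
    intro i i' x hi hi' hne
    cases h1 : ν i x with
    | none => exact Or.inl rfl
    | some s =>
      cases h2 : ν i' x with
      | none => exact Or.inr rfl
      | some s' => exact absurd ((hsupp i x s h1).symm.trans (hsupp i' x s' h2)) hne
  obtain ⟨μ, hch, hval⟩ := chain_sound L 1 ν (le_refl _)
    (by rw [hlen, docD_length]; omega) spec hdisj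
  refine ⟨μ, ?_, ?_⟩
  · rw [rgxSem, Set.mem_setOf_eq, gamma1_eq, ← hL]
    have := rmatch_of_chain hch
    rwa [show 1 + 3 * L.length = (docD b a n).length + 1 by rw [hlen, docD_length]; omega]
      at this
  · intro j
    apply (hval (j : ℕ) _).mpr
    refine ⟨(j : ℕ), by omega, ?_⟩
    simp only [hν]
    rw [dif_pos j.2]
    rw [minsert_apply, if_pos rfl]

/-! ### Semantics of γ2^c -/

lemma gamma2i_eq (c : List (Fin n × Bool)) :
    gamma2iS19 a b c = concatList (List.ofFn fun j : Fin n => blockS19 a b c j) := rfl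

lemma gamma2i_complete (c : List (Fin n × Bool))
    (hnd : ∀ l ∈ c, ∀ l' ∈ c, l.1 = l'.1 → l = l') {μ : VMapping}
    (h : μ ∈ rgxSem (gamma2iS19 a b c) (docD b a n)) :
    ∀ l ∈ c, μ (l.1 : ℕ) =
      some (3*(l.1:ℕ)+2, if l.2 then 3*(l.1:ℕ)+2 else 3*(l.1:ℕ)+3) := by
  rw [rgxSem, Set.mem_setOf_eq, gamma2i_eq] at h
  have hch := chain_of_rmatch _ h
  set L := List.ofFn fun j : Fin n => blockS19 a b c j with hL
  have hlen : L.length = n := by simp [hL]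
  have spec : ∀ i (hi : i < L.length), ∀ q μ', RMatch L[i] (docD b a n) (1 + 3*i) q μ' →
      q = 1 + 3*i + 3 ∧ (∃ hi' : i < n, μ' = nu2 c ⟨i, hi'⟩) := by
    intro i hi q μ' hm
    have hi' : i < n := by omega
    have hget : L[i] = blockS19 a b c ⟨i, hi'⟩ := by simp [hL]
    rw [hget] at hm
    have := g2block_complete c ⟨i, hi'⟩ q μ' hm
    exact ⟨this.1, hi', this.2⟩
  obtain ⟨-, hval, hdom⟩ := chain_complete L _ hch spec
  intro l hl
  -- find? returns l itself
  have hfind : c.find? (fun l' => decide (l'.1 = l.1)) = some l := by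
    have hex : ∃ l' ∈ c, (fun l' : Fin n × Bool => decide (l'.1 = l.1)) l' = true := by
      exact ⟨l, hl, by simp⟩
    obtain ⟨l0, hl0⟩ := Option.isSome_iff_exists.mp (List.find?_isSome.mpr hex)
    have hl0mem := List.mem_of_find?_eq_some hl0
    have hl0p : l0.1 = l.1 := by simpa using List.find?_some hl0
    rw [hl0, hnd l0 hl0mem l hl hl0p]
  have hnu : nu2 c l.1 (l.1 : ℕ) =
      some (3*(l.1:ℕ)+2, if l.2 then 3*(l.1:ℕ)+2 else 3*(l.1:ℕ)+3) := by
    rw [nu2_eq_some hfind, minsert_apply, if_pos rfl]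
  have hne : μ (l.1 : ℕ) ≠ none := by
    apply hdom (l.1 : ℕ) (by omega)
    rintro μ' ⟨hi', rfl⟩
    rw [show (⟨(l.1 : ℕ), hi'⟩ : Fin n) = l.1 from Fin.eta l.1 hi', hnu]
    simp
  cases hμ : μ (l.1 : ℕ) with
  | none => exact absurd hμ hne
  | some s =>
    obtain ⟨i, hi, μ', ⟨hi', rfl⟩, hv⟩ := hval (l.1 : ℕ) s hμ
    have hxi : (l.1 : ℕ) = i := nu2_support hv
    subst hxi
    rw [show (⟨(l.1 : ℕ), hi'⟩ : Fin n) = l.1 from Fin.eta l.1 hi', hnu] at hv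
    rw [Option.some.inj hv]

lemma gamma2i_sound (c : List (Fin n × Bool)) :
    ∃ μ ∈ rgxSem (gamma2iS19 a b c) (docD b a n),
      ∀ x s, μ x = some s → ∃ hx : x < n, ∃ l0,
        c.find? (fun l' => decide (l'.1 = ⟨x, hx⟩)) = some l0 ∧
        s = (3*x+2, if l0.2 then 3*x+2 else 3*x+3) := by
  set L := List.ofFn fun j : Fin n => blockS19 a b c j with hL
  have hlen : L.length = n := by simp [hL]
  set ν : ℕ → VMapping := fun i => if h : i < n then nu2 c ⟨i, h⟩ else emptyMapping with hν
  have hsupp : ∀ i x s, ν i x = some s → x = i := by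
    intro i x s hs
    simp only [hν] at hs
    by_cases h : i < n
    · rw [dif_pos h] at hs; simpa using nu2_support hs
    · rw [dif_neg h] at hs; exact absurd hs (by simp [emptyMapping])
  have spec : ∀ i (hi : i < L.length),
      RMatch L[i] (docD b a n) (1 + 3*i) (1 + 3*i + 3) (ν i) := by
    intro i hi
    have hi' : i < n := by omega
    have hget : L[i] = blockS19 a b c ⟨i, hi'⟩ := by simp [hL]
    rw [hget]
    simp only [hν]
    rw [dif_pos hi']
    exact g2block_sound c ⟨i, hi'⟩
  have hdisj : ∀ i i' x, i < L.length → i' < L.length → i ≠ i' →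
      ν i x = none ∨ ν i' x = none := by
    intro i i' x hi hi' hne
    cases h1 : ν i x with
    | none => exact Or.inl rfl
    | some s =>
      cases h2 : ν i' x with
      | none => exact Or.inr rfl
      | some s' => exact absurd ((hsupp i x s h1).symm.trans (hsupp i' x s' h2)) hne
  obtain ⟨μ, hch, hval⟩ := chain_sound L 1 ν (le_refl _)
    (by rw [hlen, docD_length]; omega) spec hdisj
  refine ⟨μ, ?_, ?_⟩
  · rw [rgxSem, Set.mem_setOf_eq, gamma2i_eq, ← hL]
    have := rmatch_of_chain hch
    rwa [show 1 + 3 * L.length = (docD b a n).length + 1 by rw [hlen, docD_length]; omega]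
      at this
  · intro x s hs
    obtain ⟨i, hi, hv⟩ := (hval x s).mp hs
    have hxi : x = i := hsupp i x s hv
    subst hxi
    have hx : x < n := by omega
    refine ⟨hx, ?_⟩
    simp only [hν] at hv
    rw [dif_pos hx] at hv
    cases hf : c.find? (fun l' => decide (l'.1 = ⟨x, hx⟩)) with
    | none =>
      rw [nu2_eq_none hf] at hv
      exact absurd hv (by simp [emptyMapping])
    | some l0 =>
      rw [nu2_eq_some hf] at hv
      refine ⟨l0, rfl, ?_⟩
      have := minsert_empty_eq_some.mp hv
      exact this.2

end Sem
/-! ### Functionality of γ1 -/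

lemma concatList_vars : ∀ L : List (RGX Sig),
    (concatList L).vars = L.foldr (fun α s => α.vars ∪ s) ∅
  | [] => by simp [concatList, RGX.vars]
  | [α] => by simp [concatList]
  | α :: β :: L => by
    show (α.vars ∪ (concatList (β :: L)).vars) = _
    rw [concatList_vars (β :: L)]
    rfl

lemma disjoint_foldr (s : Finset ℕ) : ∀ L : List (RGX Sig),
    (∀ β ∈ L, Disjoint s β.vars) → Disjoint s (L.foldr (fun α t => α.vars ∪ t) ∅)
  | [], h => by simp
  | α :: L, h => by
    simp only [List.foldr_cons, Finset.disjoint_union_right]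
    exact ⟨h α (by simp), disjoint_foldr s L (fun β hβ => h β (List.mem_cons_of_mem _ hβ))⟩

lemma concatList_functional : ∀ L : List (RGX Sig),
    (∀ α ∈ L, FunctionalFor α α.vars) →
    List.Pairwise (fun α β => Disjoint α.vars β.vars) L →
    FunctionalFor (concatList L) (concatList L).vars
  | [], h, hp => FunctionalFor.word RGX.IsWord.eps
  | [α], h, hp => h α (by simp)
  | α :: β :: L, h, hp => by
    show FunctionalFor (RGX.concat α (concatList (β :: L)))
      (RGX.concat α (concatList (β :: L))).vars
    have hvars : (RGX.concat α (concatList (β :: L))).vars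
        = α.vars ∪ (concatList (β :: L)).vars := rfl
    have hdisj : Disjoint α.vars (concatList (β :: L)).vars := by
      rw [concatList_vars]
      exact disjoint_foldr _ _ (fun γ hγ => (List.pairwise_cons.mp hp).1 γ hγ)
    refine FunctionalFor.concat α.vars ?_ (h α (by simp)) ?_
    · rw [hvars]; exact Finset.subset_union_left
    · have hsd : (RGX.concat α (concatList (β :: L))).vars \ α.vars
          = (concatList (β :: L)).vars := by
        rw [hvars, Finset.union_sdiff_cancel_left hdisj]
      rw [hsd]
      exact concatList_functional (β :: L)
        (fun γ hγ => h γ (List.mem_cons_of_mem _ hγ))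
        (List.pairwise_cons.mp hp).2

lemma g1block_vars (a b : Sig) (x : ℕ) : (g1block a b x).vars = {x} := by
  simp [g1block, RGX.vars]

lemma g1block_functional (a b : Sig) (x : ℕ) :
    FunctionalFor (g1block a b x) (g1block a b x).vars := by
  rw [g1block_vars]
  have hstar : FunctionalFor (.star (.letter a) : RGX Sig) ∅ :=
    FunctionalFor.star (FunctionalFor.word (RGX.IsWord.letter a))
  have hbind : FunctionalFor (.bind x (.star (.letter a)) : RGX Sig) {x} :=
    FunctionalFor.bind (by rw [Finset.erase_singleton]; exact hstar)
  have htail : FunctionalFor (.concat (.star (.letter a)) (.letter b) : RGX Sig) ∅ := by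
    refine FunctionalFor.concat ∅ (by simp) hstar ?_
    rw [Finset.sdiff_empty]
    exact FunctionalFor.word (RGX.IsWord.letter b)
  have hmid : FunctionalFor (.concat (.bind x (.star (.letter a)))
      (.concat (.star (.letter a)) (.letter b)) : RGX Sig) {x} := by
    refine FunctionalFor.concat {x} (by simp) hbind ?_
    rw [Finset.sdiff_self]
    exact htail
  refine FunctionalFor.concat ∅ (by simp) (FunctionalFor.word (RGX.IsWord.letter b)) ?_
  rw [Finset.sdiff_empty]
  exact hmid

lemma gamma1_functional (a b : Sig) (n : ℕ) : (gamma1S19 a b n).Functional := by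
  rw [RGX.Functional, gamma1_eq]
  apply concatList_functional
  · intro α hα
    obtain ⟨j, rfl⟩ := List.mem_ofFn.mp hα
    exact g1block_functional a b (j : ℕ)
  · rw [List.pairwise_ofFn]
    intro i j hij
    rw [g1block_vars, g1block_vars]
    simp only [Finset.disjoint_singleton_left, Finset.mem_singleton]
    intro hc
    exact absurd (Fin.val_injective hc) (ne_of_lt hij)

/-! ### Disjunction-freeness of γ2^c -/

lemma concatList_disjfree : ∀ L : List (RGX Sig),
    (∀ α ∈ L, α.DisjFree) → (concatList L).DisjFree
  | [], h => trivial
  | [α], h => h α (by simp)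
  | α :: β :: L, h => by
    show (RGX.concat α (concatList (β :: L))).DisjFree
    exact ⟨h α (by simp),
      concatList_disjfree (β :: L) (fun γ hγ => h γ (List.mem_cons_of_mem _ hγ))⟩

lemma blockS19_disjfree (a b : Sig) {n : ℕ} (c : List (Fin n × Bool)) (j : Fin n) :
    (blockS19 a b c j).DisjFree := by
  unfold blockS19
  cases c.find? (fun l => decide (l.1 = j)) with
  | none => simp [babS19, RGX.DisjFree]
  | some l =>
    cases hl2 : l.2 <;> simp [hl2, RGX.DisjFree]

lemma gamma2i_disjfree (a b : Sig) {n : ℕ} (c : List (Fin n × Bool)) :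
    (gamma2iS19 a b c).DisjFree := by
  rw [gamma2i_eq]
  apply concatList_disjfree
  intro α hα
  obtain ⟨j, rfl⟩ := List.mem_ofFn.mp hα
  exact blockS19_disjfree a b c j

/-! ### Variables of γ2^c -/

lemma mem_foldr_vars {x : ℕ} : ∀ L : List (RGX Sig),
    x ∈ L.foldr (fun α s => α.vars ∪ s) ∅ ↔ ∃ α ∈ L, x ∈ α.vars
  | [] => by simp
  | α :: L => by
    simp only [List.foldr_cons, Finset.mem_union, mem_foldr_vars L]
    simp

lemma blockS19_vars_sub (a b : Sig) {n : ℕ} (c : List (Fin n × Bool)) (j : Fin n) {x : ℕ}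
    (h : x ∈ (blockS19 a b c j).vars) :
    x = (j : ℕ) ∧ ∃ l ∈ c, l.1 = j := by
  unfold blockS19 at h
  cases hf : c.find? (fun l => decide (l.1 = j)) with
  | none => rw [hf] at h; simp [babS19, RGX.vars] at h
  | some l =>
    rw [hf] at h
    have hl : l ∈ c := List.mem_of_find?_eq_some hf
    have hl1 : l.1 = j := by simpa using List.find?_some hf
    cases hl2 : l.2 <;> simp only [hl2, Bool.false_eq_true, if_true, if_false] at h <;>
      simp [RGX.vars] at h <;> exact ⟨h, l, hl, hl1⟩

lemma gamma2i_vars (a b : Sig) {n : ℕ} (c : List (Fin n × Bool)) (j : Fin n)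
    (h : (j : ℕ) ∈ (gamma2iS19 a b c).vars) : ∃ l ∈ c, l.1 = j := by
  rw [gamma2i_eq, concatList_vars] at h
  obtain ⟨α, hα, hmem⟩ := (mem_foldr_vars _).mp h
  obtain ⟨j', rfl⟩ := List.mem_ofFn.mp hα
  obtain ⟨heq, l, hl, hl1⟩ := blockS19_vars_sub a b c j' hmem
  have : j' = j := Fin.val_injective heq.symm
  exact ⟨l, hl, by rw [hl1, this]⟩
theorem statement19 (a b : Sig) (hab : a ≠ b) (n : ℕ)
    (φ : List (List (Fin n × Bool)))
    (hlen : ∀ c ∈ φ, c.length = 2 ∨ c.length = 3)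
    (hsorted : ∀ c ∈ φ, List.Chain' (· < ·) (c.map Prod.fst))
    (hocc3 : ∀ j : Fin n, (φ.filter fun c => decide (∃ l ∈ c, l.1 = j)).length ≤ 3)
    (hocc1 : ∀ j : Fin n, ∃ c ∈ φ, ∃ l ∈ c, l.1 = j) :
    (gamma1S19 a b n).Functional ∧
    (∀ c ∈ φ, (gamma2iS19 a b c).DisjFree) ∧
    (∀ j : Fin n,
      (φ.filter fun c => decide ((j : ℕ) ∈ (gamma2iS19 a b c).vars)).length ≤ 3) ∧
    ((diffSet (rgxSem (gamma1S19 a b n) ((List.replicate n [b, a, b]).flatten))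
              (rgxSem (gamma2S19 a b φ) ((List.replicate n [b, a, b]).flatten))).Nonempty ↔
      ∃ τ : Fin n → Bool, ∀ c ∈ φ, ∃ l ∈ c, τ l.1 = l.2) := by
  -- nodup of each clause's variables
  have hnd : ∀ c ∈ φ, ∀ l ∈ c, ∀ l' ∈ c, l.1 = l'.1 → l = l' := by
    intro c hc
    have hch := hsorted c hc
    have hpw : List.Pairwise (· < ·) (c.map Prod.fst) := List.isChain_iff_pairwise.mp hch
    have hnodup : (c.map Prod.fst).Nodup := hpw.imp (fun h => ne_of_lt h)
    intro l hl l' hl' heq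
    exact List.inj_on_of_nodup_map hnodup hl hl' heq
  refine ⟨gamma1_functional a b n, fun c _ => gamma2i_disjfree a b c, ?_, ?_⟩
  · -- variable occurrence bound
    intro j
    refine le_trans (List.Sublist.length_le (List.monotone_filter_right φ ?_)) (hocc3 j)
    intro c hc
    rw [decide_eq_true_eq] at hc ⊢
    exact gamma2i_vars a b c j hc
  · -- the main equivalence
    show (diffSet (rgxSem (gamma1S19 a b n) (docD b a n))
        (rgxSem (gamma2S19 a b φ) (docD b a n))).Nonempty ↔ _
    constructor
    · rintro ⟨μ1, hμ1, hinc⟩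
      refine ⟨fun j => decide (μ1 (j : ℕ) = some (3*(j:ℕ)+2, 3*(j:ℕ)+3)), ?_⟩
      intro c hc
      obtain ⟨μ2, hμ2sem, hμ2val⟩ := gamma2i_sound (a := a) (b := b) c
      have hμ2S : μ2 ∈ rgxSem (gamma2S19 a b φ) (docD b a n) := by
        rw [rgxSem, Set.mem_setOf_eq]
        exact disj_sound (φ.map (gamma2iS19 a b)) (gamma2iS19 a b c)
          (List.mem_map.mpr ⟨c, hc, rfl⟩) _ _ _ _ hμ2sem
      have hnc := hinc μ2 hμ2S
      rw [Compatible] at hnc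
      push_neg at hnc
      obtain ⟨x, s1, s2, h1, h2, hne⟩ := hnc
      obtain ⟨hx, l0, hf, hs2⟩ := hμ2val x s2 h2
      have hl0mem : l0 ∈ c := List.mem_of_find?_eq_some hf
      have hl01 : l0.1 = ⟨x, hx⟩ := by simpa using List.find?_some hf
      obtain ⟨-, hs1⟩ := gamma1_complete hab hμ1 x s1 h1
      refine ⟨l0, hl0mem, ?_⟩
      rw [hl01]
      simp only [Fin.val_mk] -- coercion of ⟨x, hx⟩
      cases hb0 : l0.2 with
      | true =>
        rw [hb0, if_pos rfl] at hs2
        have hs1' : s1 = (3*x+2, 3*x+3) := by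
          rcases hs1 with rfl | rfl
          · exact absurd (hs2.symm) hne
          · rfl
        rw [decide_eq_true_eq]
        rw [← hs1']
        exact h1
      | false =>
        rw [hb0] at hs2
        simp only [Bool.false_eq_true, if_false] at hs2
        have hs1' : s1 = (3*x+2, 3*x+2) := by
          rcases hs1 with rfl | rfl
          · rfl
          · exact absurd (hs2.symm) hne
        rw [decide_eq_false_iff_not]
        rw [hs1'] at h1
        intro hcontra
        rw [h1] at hcontra
        have := Option.some.inj hcontra
        rw [Prod.mk.injEq] at this
        omega
    · rintro ⟨τ, hτ⟩
      obtain ⟨μ1, hμ1sem, hμ1val⟩ := gamma1_sound (a := a) (b := b) τ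
      refine ⟨μ1, hμ1sem, ?_⟩
      intro μ2 hμ2 hcomp
      rw [rgxSem, Set.mem_setOf_eq] at hμ2
      obtain ⟨α, hα, hm⟩ := disj_complete (φ.map (gamma2iS19 a b)) hμ2
      obtain ⟨c, hc, rfl⟩ := List.mem_map.mp hα
      have hμ2c : μ2 ∈ rgxSem (gamma2iS19 a b c) (docD b a n) := hm
      obtain ⟨l, hl, hτl⟩ := hτ c hc
      have h2 := gamma2i_complete c (hnd c hc) hμ2c l hl
      have h1 := hμ1val l.1
      have := hcomp (l.1 : ℕ) _ _ h1 h2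
      rw [Prod.mk.injEq] at this
      cases hb : l.2 with
      | true =>
        rw [hb] at this hτl
        rw [hτl] at this
        simp at this
      | false =>
        rw [hb] at this hτl
        rw [hτl] at this
        simp at this

end Spanners
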